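/- Let U ⊆ ℝ^{m+1} be bounded, convex, and open, let x ∈ ℝ^{m+1} and r > 0, and let π be the nearest-point projection onto closure(U). Then π maps ∂B(x,r) \ U onto a set containing B(x,r) ∩ ∂U. -/

import Mathlib

open Metric RealInnerProductSpace

set_option maxHeartbeats 1000000

theorem stmt12 (m : ℕ) (U : Set (EuclideanSpace ℝ (Fin (m + 1))))
    (hU : Convex ℝ U) (hbdd : Bornology.IsBounded U) (hopen : IsOpen U)
    (hne : U.Nonempty) (x : EuclideanSpace ℝ (Fin (m + 1))) (r : ℝ) (hr : 0 < r)
    (π : EuclideanSpace ℝ (Fin (m + 1)) → EuclideanSpace ℝ (Fin (m + 1)))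
    (hproj : ∀ z, π z ∈ closure U ∧ ∀ w ∈ closure U, dist z (π z) ≤ dist z w) :
    ball x r ∩ frontier U ⊆ π '' (sphere x r \ U) := by
  intro p hp
  have hpball : p ∈ ball x r := hp.1
  have hpcl : p ∈ closure U := hp.2.1
  have hpU : p ∉ U := fun h => hp.2.2 (by rwa [hopen.interior_eq])
  -- supporting functional
  obtain ⟨f, hf⟩ := geometric_hahn_banach_open_point hU hopen hpU
  set v := (InnerProductSpace.toDual ℝ (EuclideanSpace ℝ (Fin (m + 1)))).symm f with hv
  have hfv : ∀ w, f w = ⟪v, w⟫ := fun w =>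
    (InnerProductSpace.toDual_symm_apply).symm
  have hvne : v ≠ 0 := by
    obtain ⟨u, hu⟩ := hne
    intro h
    have h1 := hf u hu
    rw [hfv u, hfv p, h] at h1
    simp at h1
  have hcl : ∀ w ∈ closure U, f w ≤ f p := by
    have : closure U ⊆ {w | f w ≤ f p} :=
      closure_minimal (fun a ha => (hf a ha).le)
        (isClosed_le f.continuous continuous_const)
    exact fun w hw => this hw
  set n : EuclideanSpace ℝ (Fin (m + 1)) := ‖v‖⁻¹ • v with hn
  have hnorm : ‖n‖ = 1 := norm_smul_inv_norm hvne
  have hfn : f n = ‖v‖ := by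
    rw [hfv, hn, real_inner_smul_right, real_inner_self_eq_norm_sq]
    have : ‖v‖ ≠ 0 := norm_ne_zero_iff.2 hvne
    field_simp
  -- find t with p + t • n on the sphere
  set g : ℝ → ℝ := fun t => dist (p + t • n) x with hg
  have hgc : Continuous g := by
    apply Continuous.dist _ continuous_const
    exact continuous_const.add (continuous_id.smul continuous_const)
  have hg0 : g 0 < r := by simpa [hg] using hpball
  set T : ℝ := r + dist p x with hT
  have hT0 : (0:ℝ) ≤ T := by positivity
  have hgT : r ≤ g T := by
    have h1 : dist (p + T • n) p = ‖T • n‖ := by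
      simp [dist_eq_norm]
    have h2 : ‖T • n‖ = T := by
      rw [norm_smul, hnorm, Real.norm_eq_abs, abs_of_nonneg hT0, mul_one]
    have h3 : dist (p + T • n) p ≤ dist (p + T • n) x + dist x p :=
      dist_triangle _ _ _
    have h4 : dist x p = dist p x := dist_comm _ _
    simp only [hg]
    linarith [h1, h2, h3]
  obtain ⟨t, ht, hgt⟩ := intermediate_value_Icc hT0 hgc.continuousOn ⟨hg0.le, hgT⟩
  have htpos : 0 < t := by
    rcases ht.1.lt_or_eq with h | h
    · exact h
    · exfalso; rw [← h] at hgt; linarith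
  set q : EuclideanSpace ℝ (Fin (m + 1)) := p + t • n with hq
  have hqsphere : q ∈ sphere x r := by simpa [hq, mem_sphere, hg, dist_eq_norm] using hgt
  have hfq : f q = f p + t * ‖v‖ := by
    simp [hq, map_add, map_smul, hfn, smul_eq_mul]
  have hqU : q ∉ U := by
    intro h
    have := hf q h
    have hv0 : 0 < ‖v‖ := norm_pos_iff.2 hvne
    nlinarith
  -- p minimizes distance from q over closure U
  have hmin : ∀ w ∈ closure U, dist q p ≤ dist q w := by
    intro w hw
    have hinner : 0 ≤ ⟪t • n, p - w⟫ := by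
      have h1 : ⟪v, p - w⟫ = f p - f w := by rw [hfv p, hfv w, inner_sub_right]
      have h2 : (0:ℝ) ≤ f p - f w := by linarith [hcl w hw]
      rw [hn, smul_smul, real_inner_smul_left, h1]
      have hv0 : 0 < ‖v‖ := norm_pos_iff.2 hvne
      positivity
    have hdec : q - w = t • n + (p - w) := by
      simp [hq]; abel
    have hsq : ‖q - p‖ ^ 2 ≤ ‖q - w‖ ^ 2 := by
      have hqp : q - p = t • n := by simp [hq]
      rw [hdec, hqp]
      have := norm_add_sq_real (t • n) (p - w)
      nlinarith [sq_nonneg ‖p - w‖]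
    rw [dist_eq_norm, dist_eq_norm]
    nlinarith [norm_nonneg (q - p), norm_nonneg (q - w)]
  -- π q = p by uniqueness (parallelogram law)
  obtain ⟨hπcl, hπmin⟩ := hproj q
  have hd1 : dist q (π q) ≤ dist q p := hπmin p hpcl
  have hd2 : dist q p ≤ dist q (π q) := hmin _ hπcl
  have hd : dist q (π q) = dist q p := le_antisymm hd1 hd2
  have hπp : π q = p := by
    set a := q - p with ha
    set b := q - π q with hb
    set mm : EuclideanSpace ℝ (Fin (m + 1)) := (2:ℝ)⁻¹ • (p + π q) with hmm
    have hmid : mm ∈ closure U := by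
      have := (hU.closure) hpcl hπcl (by norm_num : (0:ℝ) ≤ 2⁻¹)
        (by norm_num : (0:ℝ) ≤ 2⁻¹) (by norm_num)
      rwa [hmm, smul_add]
    have hsum : a + b = (2:ℝ) • (q - mm) := by
      rw [ha, hb, hmm]; module
    have hdm : dist q p ≤ dist q mm := hmin _ hmid
    have hpar := parallelogram_law_with_norm ℝ a b
    have hna : ‖a‖ = dist q p := by rw [ha, dist_eq_norm]
    have hnb : ‖b‖ = dist q p := by rw [hb, ← hd, dist_eq_norm]
    have hnsum : ‖a + b‖ = 2 * ‖q - mm‖ := by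
      rw [hsum, norm_smul]; norm_num
    have hqm : dist q mm = ‖q - mm‖ := dist_eq_norm _ _
    rw [hqm] at hdm
    rw [hna, hnb, hnsum] at hpar
    have hab : ‖a - b‖ = 0 := by
      nlinarith [norm_nonneg (a - b), (dist_nonneg : 0 ≤ dist q p)]
    have : a - b = 0 := norm_eq_zero.1 hab
    have : π q - p = 0 := by
      rw [ha, hb] at this
      have h2 : q - p - (q - π q) = π q - p := by abel
      rw [h2] at this; exact this
    have := sub_eq_zero.1 this
    exact this
  exact ⟨q, ⟨hqsphere, hqU⟩, hπp⟩
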